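/- Every torsion-free nilpotent group of nilpotency class at most 2 has the Magnus property. -/

import Mathlib

open scoped commutatorElement

section MPaux

variable {G : Type*} [Group G]

private lemma MP.comm_central (hc : ∀ a b : G, ⁅a, b⁆ ∈ Subgroup.center G)
    (a b x : G) : x * ⁅a, b⁆ = ⁅a, b⁆ * x :=
  (Subgroup.mem_center_iff.mp (hc a b)) x

private lemma MP.central_commute (hc : ∀ a b : G, ⁅a, b⁆ ∈ Subgroup.center G)
    (a b w : G) : Commute ⁅a, b⁆ w :=
  ((Subgroup.mem_center_iff.mp (hc a b)) w).symm

private lemma MP.comm_mul_right (hc : ∀ a b : G, ⁅a, b⁆ ∈ Subgroup.center G)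
    (a b c : G) : ⁅a, b * c⁆ = ⁅a, b⁆ * ⁅a, c⁆ := by
  have h1 : ⁅a, b * c⁆ = ⁅a, b⁆ * (b * ⁅a, c⁆ * b⁻¹) := by
    simp only [commutatorElement_def]; group
  rw [h1, MP.comm_central hc a c b]
  simp [mul_assoc]

private lemma MP.comm_inv_right (hc : ∀ a b : G, ⁅a, b⁆ ∈ Subgroup.center G)
    (a b : G) : ⁅a, b⁻¹⁆ = ⁅a, b⁆⁻¹ := by
  have h := MP.comm_mul_right hc a b b⁻¹
  rw [mul_inv_cancel, commutatorElement_one_right] at h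
  exact eq_inv_of_mul_eq_one_right h.symm

private lemma MP.comm_zpow_right (hc : ∀ a b : G, ⁅a, b⁆ ∈ Subgroup.center G)
    (a b : G) (n : ℤ) : ⁅a, b ^ n⁆ = ⁅a, b⁆ ^ n := by
  induction n using Int.induction_on with
  | zero => simp
  | succ k ih =>
      rw [zpow_add, zpow_one, MP.comm_mul_right hc, ih, zpow_add, zpow_one]
  | pred k ih =>
      rw [zpow_sub_one, MP.comm_mul_right hc, ih, MP.comm_inv_right hc, zpow_sub_one]

private lemma MP.comm_mul_left (hc : ∀ a b : G, ⁅a, b⁆ ∈ Subgroup.center G)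
    (a b c : G) : ⁅a * b, c⁆ = ⁅a, c⁆ * ⁅b, c⁆ := by
  have h1 : ⁅a * b, c⁆ = ⁅c, a * b⁆⁻¹ := (commutatorElement_inv c (a * b)).symm
  rw [h1, MP.comm_mul_right hc c a b, mul_inv_rev, commutatorElement_inv,
    commutatorElement_inv]
  exact MP.comm_central hc a c ⁅b, c⁆

private lemma MP.comm_inv_left (hc : ∀ a b : G, ⁅a, b⁆ ∈ Subgroup.center G)
    (a b : G) : ⁅a⁻¹, b⁆ = ⁅a, b⁆⁻¹ := by
  have h := MP.comm_mul_left hc a a⁻¹ b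
  rw [mul_inv_cancel, commutatorElement_one_left] at h
  exact eq_inv_of_mul_eq_one_right h.symm

private lemma MP.comm_zpow_left (hc : ∀ a b : G, ⁅a, b⁆ ∈ Subgroup.center G)
    (a b : G) (n : ℤ) : ⁅a ^ n, b⁆ = ⁅a, b⁆ ^ n := by
  rw [← commutatorElement_inv b, MP.comm_zpow_right hc, ← inv_zpow,
    commutatorElement_inv]

private lemma MP.conj_eq (hc : ∀ a b : G, ⁅a, b⁆ ∈ Subgroup.center G)
    (a b : G) : b⁻¹ * a * b = a * ⁅a, b⁆ := by
  have h : b⁻¹ * a * b = a * ⁅a⁻¹, b⁻¹⁆ := by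
    simp only [commutatorElement_def]; group
  rw [h, MP.comm_inv_left hc, MP.comm_inv_right hc, inv_inv]

private lemma MP.nc_mem (hc : ∀ a b : G, ⁅a, b⁆ ∈ Subgroup.center G)
    (g : G) {z : G} (hz : z ∈ Subgroup.normalClosure {g}) :
    ∃ (n : ℤ) (x : G), z = g ^ n * ⁅g, x⁆ := by
  let S : Subgroup G :=
    { carrier := {w : G | ∃ (n : ℤ) (x : G), w = g ^ n * ⁅g, x⁆}
      one_mem' := ⟨0, 1, by simp⟩
      mul_mem' := by
        rintro a b ⟨n, x, rfl⟩ ⟨m, y, rfl⟩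
        refine ⟨n + m, x * y, ?_⟩
        rw [MP.comm_mul_right hc, zpow_add]
        calc g ^ n * ⁅g, x⁆ * (g ^ m * ⁅g, y⁆)
            = g ^ n * (⁅g, x⁆ * g ^ m) * ⁅g, y⁆ := by group
          _ = g ^ n * (g ^ m * ⁅g, x⁆) * ⁅g, y⁆ := by
              rw [← MP.comm_central hc g x (g ^ m)]
          _ = g ^ n * g ^ m * (⁅g, x⁆ * ⁅g, y⁆) := by group
      inv_mem' := by
        rintro a ⟨n, x, rfl⟩
        refine ⟨-n, x⁻¹, ?_⟩
        rw [MP.comm_inv_right hc, mul_inv_rev, zpow_neg]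
        exact ((MP.central_commute hc g x (g ^ n)).inv_inv).eq }
  have hS : S.Normal := by
    constructor
    rintro a ⟨n, x, rfl⟩ y
    refine ⟨n, (y⁻¹) ^ n * x, ?_⟩
    have h1 : y * g ^ n * y⁻¹ = g ^ n * ⁅g ^ n, y⁻¹⁆ := by
      have := MP.conj_eq hc (g ^ n) y⁻¹
      rwa [inv_inv] at this
    calc y * (g ^ n * ⁅g, x⁆) * y⁻¹
        = y * g ^ n * (⁅g, x⁆ * y⁻¹) := by group
      _ = y * g ^ n * (y⁻¹ * ⁅g, x⁆) := by rw [(MP.central_commute hc g x y⁻¹).eq]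
      _ = (y * g ^ n * y⁻¹) * ⁅g, x⁆ := by group
      _ = g ^ n * ⁅g ^ n, y⁻¹⁆ * ⁅g, x⁆ := by rw [h1]
      _ = g ^ n * (⁅g, y⁻¹⁆ ^ n * ⁅g, x⁆) := by
          rw [MP.comm_zpow_left hc]; group
      _ = g ^ n * ⁅g, (y⁻¹) ^ n * x⁆ := by
          rw [MP.comm_mul_right hc, MP.comm_zpow_right hc]
  haveI := hS
  have hle : Subgroup.normalClosure {g} ≤ S := by
    apply Subgroup.normalClosure_le_normal
    intro w hw
    rw [Set.mem_singleton_iff] at hw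
    exact hw ▸ ⟨1, 1, by simp⟩
  exact hle hz

end MPaux

/-- The December 2024 Mathlib definition, removed since. -/
def Monoid.IsTorsionFree (G : Type*) [Monoid G] : Prop :=
  ∀ g : G, g ≠ 1 → ¬IsOfFinOrder g

def MagnusProperty (G : Type*) [Group G] : Prop :=
  ∀ g h : G, Subgroup.normalClosure {g} = Subgroup.normalClosure {h} →
    IsConj g h ∨ IsConj g h⁻¹

theorem magnus_of_torsionFree_class_two (G : Type*) [Group G]
    (htf : Monoid.IsTorsionFree G)
    (hclass2 : commutator G ≤ Subgroup.center G) :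
    MagnusProperty G := by
  have hc : ∀ a b : G, ⁅a, b⁆ ∈ Subgroup.center G := by
    intro a b
    apply hclass2
    rw [commutator_def]
    exact Subgroup.commutator_mem_commutator (Subgroup.mem_top a) (Subgroup.mem_top b)
  have tf : ∀ (a : G) (k : ℤ), k ≠ 0 → a ^ k = 1 → a = 1 := by
    intro a k hk ha
    by_contra h0
    refine htf a h0 ?_
    rw [isOfFinOrder_iff_pow_eq_one]
    refine ⟨k.natAbs, Int.natAbs_pos.mpr hk, ?_⟩
    have hz : a ^ ((k.natAbs : ℤ)) = 1 := by
      rcases Int.natAbs_eq k with he | he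
      · rw [← he, ha]
      · rw [show ((k.natAbs : ℤ)) = -k by omega, zpow_neg, ha, inv_one]
    rwa [zpow_natCast] at hz
  intro g h heq
  have hh_mem : h ∈ Subgroup.normalClosure {g} := by
    rw [heq]; exact Subgroup.subset_normalClosure rfl
  have hg_mem : g ∈ Subgroup.normalClosure {h} := by
    rw [← heq]; exact Subgroup.subset_normalClosure rfl
  obtain ⟨n, x, hx⟩ := MP.nc_mem hc g hh_mem
  obtain ⟨m, y, hy⟩ := MP.nc_mem hc h hg_mem
  -- compute : g = g ^ (n * m) * ⁅g, x ^ m * y ^ n⁆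
  have hcomm : ⁅h, y⁆ = ⁅g, y⁆ ^ n := by
    rw [hx, MP.comm_mul_left hc, MP.comm_zpow_left hc]
    have hcy : ⁅⁅g, x⁆, y⁆ = 1 := by
      rw [commutatorElement_eq_one_iff_commute]
      exact (Subgroup.mem_center_iff.mp (hc g x) y).symm
    rw [hcy, mul_one]
  have hpow : h ^ m = g ^ (n * m) * ⁅g, x⁆ ^ m := by
    rw [hx]
    have hcomm2 : Commute (g ^ n) ⁅g, x⁆ :=
      (Subgroup.mem_center_iff.mp (hc g x) (g ^ n))
    rw [hcomm2.mul_zpow, ← zpow_mul]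
  have key : g = g ^ (n * m) * ⁅g, x ^ m * y ^ n⁆ := by
    calc g = h ^ m * ⁅h, y⁆ := hy
      _ = g ^ (n * m) * ⁅g, x⁆ ^ m * ⁅g, y⁆ ^ n := by rw [hpow, hcomm]
      _ = g ^ (n * m) * (⁅g, x ^ m⁆ * ⁅g, y ^ n⁆) := by
          rw [MP.comm_zpow_right hc, MP.comm_zpow_right hc]; group
      _ = g ^ (n * m) * ⁅g, x ^ m * y ^ n⁆ := by rw [MP.comm_mul_right hc]
  by_cases h1 : n * m = 1
  · rcases Int.mul_eq_one_iff_eq_one_or_neg_one.mp h1 with ⟨hn, _⟩ | ⟨hn, _⟩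
    · left
      rw [isConj_iff]
      refine ⟨x⁻¹, ?_⟩
      rw [inv_inv, MP.conj_eq hc g x, hx, hn, zpow_one]
    · right
      rw [isConj_iff]
      refine ⟨x, ?_⟩
      have : h⁻¹ = g * ⁅g, x⁻¹⁆ := by
        rw [hx, hn, mul_inv_rev, MP.comm_inv_right hc, zpow_neg_one, inv_inv]
        exact ((MP.central_commute hc g x g).inv_left).eq
      rw [this]
      have h2 := MP.conj_eq hc g x⁻¹
      rwa [inv_inv] at h2
  · -- torsion-free case
    have hk : (1 : ℤ) - n * m ≠ 0 := by omega
    set t := x ^ m * y ^ n with ht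
    have hgk : g ^ ((1 : ℤ) - n * m) = ⁅g, t⁆ := by
      rw [zpow_sub, zpow_one]
      nth_rewrite 1 [key]
      rw [← (MP.central_commute hc g t (g ^ (n * m))).eq]
      group
    have hgc : ∀ w : G, ⁅g, w⁆ = 1 := by
      intro w
      apply tf _ ((1 : ℤ) - n * m) hk
      rw [← MP.comm_zpow_left hc, hgk]
      rw [commutatorElement_eq_one_iff_commute]
      exact MP.central_commute hc g t w
    have hg1 : g = 1 := by
      apply tf _ ((1 : ℤ) - n * m) hk
      rw [hgk, hgc]
    have hh1 : h = 1 := by rw [hx, hgc x, hg1]; simp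
    left
    rw [hg1, hh1]
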